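/- Let k ≥ 1 and l ∈ ℕ. Define the generalized Hermite polynomial ψ*_l(y) = (1/√(l!))·∑_{j=0}^{⌊l/(2k+1)⌋} ((−1)^{k·j}/j!)·D_y^{(2k+1)j}(y^l), i.e. ψ*_l(y) = (1/√(l!))·∑_{j=0}^{⌊l/(2k+1)⌋} ((−1)^{k·j}/j!)·(l!/(l−(2k+1)j)!)·y^{l−(2k+1)j}. Then ψ*_l is an eigenfunction of the adjoint operator B* with eigenvalue λ_l = −l/(2k+1): for all y ∈ ℝ, (−1)^{k+1}·(ψ*_l)^{(2k+1)}(y) − (1/(2k+1))·y·(ψ*_l)′(y) = −(l/(2k+1))·ψ*_l(y). -/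

import Mathlib

open Polynomial Finset

private lemma iteratedDeriv_poly (p : Polynomial ℝ) (n : ℕ) :
    iteratedDeriv n (fun x => p.eval x) = fun x => (Polynomial.derivative^[n] p).eval x := by
  induction n with
  | zero =>
    funext x
    rw [Function.iterate_zero_apply, iteratedDeriv_zero]
  | succ n ih =>
    rw [iteratedDeriv_succ, ih, Function.iterate_succ_apply']
    funext x
    exact (Polynomial.derivative^[n] p).deriv

private lemma iter_deriv_sum (n : ℕ) (s : Finset ℕ) (f : ℕ → Polynomial ℝ) :
    Polynomial.derivative^[n] (∑ j ∈ s, f j) = ∑ j ∈ s, Polynomial.derivative^[n] (f j) := by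
  induction n with
  | zero => simp
  | succ n ih => simp only [Function.iterate_succ_apply', ih, derivative_sum]

/-- The generalized Hermite polynomial
`ψ*_l(y) = (1/√(l!)) ∑_{j=0}^{⌊l/(2k+1)⌋} ((-1)^(k·j)/j!)·(l!/(l-(2k+1)j)!)·y^(l-(2k+1)j)`
is an eigenfunction of `B*` with eigenvalue `-l/(2k+1)`. -/
theorem stmt8 (k l : ℕ) (hk : 1 ≤ k) (ψ : ℝ → ℝ)
    (hψ : ∀ z : ℝ, ψ z = (1 / Real.sqrt (Nat.factorial l)) *
      ∑ j ∈ Finset.range (l / (2 * k + 1) + 1),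
        ((-1 : ℝ) ^ (k * j) / (Nat.factorial j : ℝ)) *
          ((Nat.factorial l : ℝ) / (Nat.factorial (l - (2 * k + 1) * j) : ℝ)) *
          z ^ (l - (2 * k + 1) * j)) :
    ∀ y : ℝ,
      (-1 : ℝ) ^ (k + 1) * iteratedDeriv (2 * k + 1) ψ y
        - (1 / (2 * (k : ℝ) + 1)) * y * deriv ψ y
      = -((l : ℝ) / (2 * (k : ℝ) + 1)) * ψ y := by
  intro y
  set m : ℕ := 2 * k + 1 with hm
  set N : ℕ := l / m with hN
  set b : ℕ → ℝ := fun j => (1 / Real.sqrt (Nat.factorial l)) *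
    ((-1 : ℝ) ^ (k * j) / (Nat.factorial j : ℝ)) *
      ((Nat.factorial l : ℝ) / (Nat.factorial (l - m * j) : ℝ)) with hb
  set Q : Polynomial ℝ := ∑ j ∈ Finset.range (N + 1), C (b j) * X ^ (l - m * j) with hQ
  have hψQ : ψ = fun z => Q.eval z := by
    funext z
    rw [hψ, hQ]
    simp only [eval_finset_sum, eval_mul, eval_C, eval_pow, eval_X, hb]
    rw [Finset.mul_sum]
    exact Finset.sum_congr rfl fun j _ => by ring
  have hQiter : ∀ n : ℕ, ((Polynomial.derivative)^[n] Q).eval y =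
      ∑ j ∈ Finset.range (N + 1),
        b j * ((l - m * j).descFactorial n : ℝ) * y ^ (l - m * j - n) := by
    intro n
    rw [hQ, iter_deriv_sum]
    rw [eval_finset_sum]
    refine Finset.sum_congr rfl fun j _ => ?_
    rw [Polynomial.iterate_derivative_C_mul, Polynomial.iterate_derivative_X_pow_eq_C_mul]
    simp [mul_assoc]
  have hI : iteratedDeriv (2 * k + 1) ψ y =
      ∑ j ∈ Finset.range (N + 1),
        b j * ((l - m * j).descFactorial m : ℝ) * y ^ (l - m * j - m) := by
    rw [hψQ, iteratedDeriv_poly]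
    exact hQiter m
  have hD : deriv ψ y =
      ∑ j ∈ Finset.range (N + 1),
        b j * ((l - m * j).descFactorial 1 : ℝ) * y ^ (l - m * j - 1) := by
    rw [hψQ]
    rw [Polynomial.deriv, ← Function.iterate_one Polynomial.derivative]
    exact hQiter 1
  have hmpos : (0:ℕ) < m := by omega
  have hmR : (2 * (k : ℝ) + 1) = (m : ℝ) := by push_cast [hm]; ring
  have hmne : (m : ℝ) ≠ 0 := by positivity
  -- l < m * N + m and m * N ≤ l
  have hdm := Nat.div_add_mod l m
  rw [← hN] at hdm
  have hmod := Nat.mod_lt l hmpos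
  have hlN1 : l < m * N + m := by omega
  have hlN2 : m * N ≤ l := by omega
  -- key reindexing identity
  have key : (-1 : ℝ) ^ (k + 1) * ∑ j ∈ Finset.range (N + 1),
        b j * ((l - m * j).descFactorial m : ℝ) * y ^ (l - m * j - m)
      = ∑ j ∈ Finset.range (N + 1), (-(j : ℝ)) * (b j * y ^ (l - m * j)) := by
    rw [Finset.mul_sum, Finset.sum_range_succ, Finset.sum_range_succ']
    have hlast : ((l - m * N).descFactorial m : ℝ) = 0 := by
      rw [Nat.descFactorial_eq_zero_iff_lt.mpr (by omega : l - m * N < m)]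
      simp
    rw [hlast]
    simp only [Nat.cast_zero, neg_zero, zero_mul, mul_zero, add_zero]
    refine Finset.sum_congr rfl fun j hj => ?_
    have hjN : j < N := Finset.mem_range.mp hj
    have hmm : m * (j + 1) = m * j + m := by ring
    have hle : m * (j + 1) ≤ l :=
      le_trans (Nat.mul_le_mul_left m hjN) hlN2
    have hexp : l - m * j - m = l - m * (j + 1) := by omega
    have hmle : m ≤ l - m * j := by omega
    have hdf : ((l - m * j).descFactorial m : ℝ) =
        (Nat.factorial (l - m * j) : ℝ) / (Nat.factorial (l - m * (j + 1)) : ℝ) := by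
      have := Nat.factorial_mul_descFactorial hmle
      have h2 : l - m * j - m = l - m * (j + 1) := hexp
      rw [h2] at this
      have hf : (Nat.factorial (l - m * (j + 1)) : ℝ) ≠ 0 := by
        exact_mod_cast (Nat.factorial_pos _).ne'
      rw [eq_div_iff hf]
      exact_mod_cast (mul_comm _ _).trans this
    rw [hexp, hdf, hb]
    have hfl : (Nat.factorial (l - m * j) : ℝ) ≠ 0 := by
      exact_mod_cast (Nat.factorial_pos _).ne'
    have hfl2 : (Nat.factorial (l - m * (j + 1)) : ℝ) ≠ 0 := by
      exact_mod_cast (Nat.factorial_pos _).ne'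
    have hfj : (Nat.factorial j : ℝ) ≠ 0 := by
      exact_mod_cast (Nat.factorial_pos _).ne'
    have hfj1 : (Nat.factorial (j + 1) : ℝ) = ((j : ℝ) + 1) * (Nat.factorial j : ℝ) := by
      push_cast [Nat.factorial_succ]; ring
    have hsgn : (-1 : ℝ) ^ (k * (j + 1)) = (-1 : ℝ) ^ (k * j) * (-1 : ℝ) ^ k := by
      rw [← pow_add]; ring_nf
    have hsgn2 : (-1 : ℝ) ^ (k + 1) = -((-1 : ℝ) ^ k) := by
      rw [pow_succ]; ring
    simp only [hfj1, hsgn, hsgn2]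
    field_simp
    push_cast
    ring
  have hP : ψ y = ∑ j ∈ Finset.range (N + 1), b j * y ^ (l - m * j) := by
    rw [hψQ]
    simpa using hQiter 0
  rw [hI, hD, key, hmR, hP]
  rw [Finset.mul_sum, Finset.mul_sum]
  rw [← Finset.sum_sub_distrib]
  refine Finset.sum_congr rfl fun j hj => ?_
  have hjN : j ≤ N := by have := Finset.mem_range.mp hj; omega
  have hmjl : m * j ≤ l := le_trans (Nat.mul_le_mul_left m hjN) hlN2
  have hmm : m * j ≤ m * N := Nat.mul_le_mul_left m hjN
  simp only [Nat.descFactorial_one]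
  by_cases hz : l - m * j = 0
  · have hmj : m * j = l := by omega
    have hjR : (m : ℝ) * (j : ℝ) = (l : ℝ) := by exact_mod_cast hmj
    have hjR' : (j : ℝ) = (l : ℝ) / (m : ℝ) := by
      rw [eq_div_iff hmne]
      linarith [hjR]
    rw [hz]
    simp only [Nat.cast_zero, pow_zero, Nat.zero_sub, mul_zero, zero_mul, mul_one]
    linear_combination (-(b j)) * hjR'
  · have h1 : 1 ≤ l - m * j := by omega
    have hy : y * y ^ (l - m * j - 1) = y ^ (l - m * j) := by
      conv_rhs => rw [show l - m * j = (l - m * j - 1) + 1 by omega]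
      rw [pow_succ]; ring
    have hcast : ((l - m * j : ℕ) : ℝ) = (l : ℝ) - (m : ℝ) * (j : ℝ) := by
      push_cast [hmjl]; ring
    rw [hcast]
    have hminv : (m : ℝ) * (m : ℝ)⁻¹ = 1 := mul_inv_cancel₀ hmne
    linear_combination (-(b j * ((l : ℝ) - (m : ℝ) * (j : ℝ)) / (m : ℝ))) * hy
      + (b j * y ^ (l - m * j) * (j : ℝ)) * hminv
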